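/- arXiv:2106.04668 — 3 statements merged into one kernel-verified Lean document; each statement's English description precedes it below -/
import Mathlib

section
/- Let L ≥ 1, let V and I be nonempty finite types, let e ∈ ℝ, let α : I → Fin L → ℝ, and let Δ : V → Fin L → ℝ with Δ f i > 0 for all f, i. Suppose J : (Fin L → ℝ) → ℝ satisfies J(x) = min_{i ∈ I} ⟨α i, x⟩ for every x ∈ stdSimplex ℝ (Fin L), and suppose Σ_{f ∈ V} Δ f j = 1 for every j. Define A(ϖ) = e + Σ_{f ∈ V} ⟨Δ f, ϖ⟩ * J( (fun i => Δ f i * ϖ i / ⟨Δ f, ϖ⟩) ). Then for every ϖ ∈ stdSimplex ℝ (Fin L), A(ϖ) = min over all σ : V → I of ⟨β σ, ϖ⟩, where β σ : Fin L → ℝ is given by (β σ) j = e + Σ_{f ∈ V} Δ f j * (α (σ f)) j. In particular A restricted to the simplex is a minimum of finitely many linear functionals. -/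
private lemma my_mul_inf' {ι : Type*} {s : Finset ι} (H : s.Nonempty) (f : ι → ℝ)
    {c : ℝ} (hc : 0 < c) : c * s.inf' H f = s.inf' H (fun i => c * f i) := by
  apply le_antisymm
  · apply Finset.le_inf'
    intro i hi
    exact mul_le_mul_of_nonneg_left (Finset.inf'_le f hi) hc.le
  · obtain ⟨i, hi, h⟩ := Finset.exists_mem_eq_inf' H f
    rw [h]
    exact Finset.inf'_le _ hi

private lemma my_add_inf' {ι : Type*} {s : Finset ι} (H : s.Nonempty) (f : ι → ℝ)
    (c : ℝ) : c + s.inf' H f = s.inf' H (fun i => c + f i) := by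
  apply le_antisymm
  · apply Finset.le_inf'
    intro i hi
    exact add_le_add_right (Finset.inf'_le f hi) c
  · obtain ⟨i, hi, h⟩ := Finset.exists_mem_eq_inf' H f
    rw [h]
    exact Finset.inf'_le _ hi

private lemma my_sum_inf' {V I : Type*} [Fintype V] [DecidableEq V] [Fintype I] [Nonempty I]
    (g : V → I → ℝ) :
    ∑ f, Finset.univ.inf' Finset.univ_nonempty (g f)
      = Finset.univ.inf' Finset.univ_nonempty (fun σ : V → I => ∑ f, g f (σ f)) := by
  apply le_antisymm
  · apply Finset.le_inf'
    intro σ _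
    exact Finset.sum_le_sum fun f _ => Finset.inf'_le _ (Finset.mem_univ _)
  · choose σ hσ1 hσ2 using fun f =>
      Finset.exists_mem_eq_inf' (Finset.univ_nonempty (α := I)) (g f)
    calc Finset.univ.inf' Finset.univ_nonempty (fun σ : V → I => ∑ f, g f (σ f))
        ≤ ∑ f, g f (σ f) := Finset.inf'_le _ (Finset.mem_univ σ)
      _ = ∑ f, Finset.univ.inf' Finset.univ_nonempty (g f) :=
          Finset.sum_congr rfl fun f _ => (hσ2 f).symm

/-- Inductive step of Theorem 2: if the value function at the next stage admits
a finite minimum-of-hyperplanes representation `{α i}`, then the expected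
cost-to-go `A` also admits such a representation, indexed by selection
functions `σ : V → I` with hyperplanes `β σ`. -/
theorem cost_to_go_min_of_hyperplanes (L : ℕ) (hL : 1 ≤ L)
    (V I : Type*) [Fintype V] [Nonempty V] [DecidableEq V]
    [Fintype I] [Nonempty I]
    (e : ℝ) (α : I → Fin L → ℝ)
    (Δ : V → Fin L → ℝ) (hΔ : ∀ f i, 0 < Δ f i)
    (J : (Fin L → ℝ) → ℝ)
    (hJ : ∀ x ∈ stdSimplex ℝ (Fin L),
      J x = Finset.univ.inf' Finset.univ_nonempty (fun i : I => ∑ l, α i l * x l))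
    (hΔsum : ∀ j : Fin L, ∑ f, Δ f j = 1)
    (A : (Fin L → ℝ) → ℝ)
    (hA : ∀ ϖ : Fin L → ℝ,
      A ϖ = e + ∑ f, (∑ i, Δ f i * ϖ i) *
        J (fun i => Δ f i * ϖ i / ∑ i', Δ f i' * ϖ i')) :
    ∀ ϖ ∈ stdSimplex ℝ (Fin L),
      A ϖ = Finset.univ.inf' Finset.univ_nonempty
        (fun σ : V → I =>
          ∑ j, (e + ∑ f, Δ f j * α (σ f) j) * ϖ j) := by
  intro ϖ hϖ
  have hpos := hϖ.1
  have hsum := hϖ.2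
  have hS : ∀ f : V, 0 < ∑ i, Δ f i * ϖ i := by
    intro f
    have h1 : ∃ j, 0 < ϖ j := by
      by_contra h
      push_neg at h
      have h0 : ∑ i, ϖ i = 0 :=
        Finset.sum_eq_zero fun i _ => le_antisymm (h i) (hpos i)
      rw [h0] at hsum
      norm_num at hsum
    obtain ⟨j, hj⟩ := h1
    exact Finset.sum_pos' (fun i _ => mul_nonneg (hΔ f i).le (hpos i))
      ⟨j, Finset.mem_univ j, mul_pos (hΔ f j) hj⟩
  have hx : ∀ f : V,
      (fun i => Δ f i * ϖ i / ∑ i', Δ f i' * ϖ i') ∈ stdSimplex ℝ (Fin L) := by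
    intro f
    constructor
    · intro i
      exact div_nonneg (mul_nonneg (hΔ f i).le (hpos i)) (hS f).le
    · rw [← Finset.sum_div, div_self (hS f).ne']
  rw [hA]
  have step1 : ∀ f : V,
      (∑ i, Δ f i * ϖ i) * J (fun i => Δ f i * ϖ i / ∑ i', Δ f i' * ϖ i')
        = Finset.univ.inf' Finset.univ_nonempty
            (fun i : I => ∑ l, α i l * Δ f l * ϖ l) := by
    intro f
    rw [hJ _ (hx f), my_mul_inf' _ _ (hS f)]
    congr 1
    funext i
    rw [Finset.mul_sum]
    apply Finset.sum_congr rfl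
    intro l _
    rw [eq_comm]
    field_simp
    rw [mul_div_cancel_right₀ _ (hS f).ne']
  simp_rw [step1]
  rw [my_sum_inf', my_add_inf']
  congr 1
  funext σ
  have : ∀ j, (e + ∑ f, Δ f j * α (σ f) j) * ϖ j
      = e * ϖ j + ∑ f, α (σ f) j * Δ f j * ϖ j := by
    intro j
    rw [add_mul, Finset.sum_mul]
    congr 1
    apply Finset.sum_congr rfl
    intro f _
    ring
  simp_rw [this]
  rw [Finset.sum_add_distrib, ← Finset.mul_sum, hsum, mul_one, Finset.sum_comm]
end

section
/- Fix integers L ≥ 1 and K ≥ 1. For each k ∈ {1,…,K} let V_k be a nonempty finite type, let Δ_k : V_k → Fin L → ℝ satisfy Δ_k f j > 0 for all f, j and Σ_{f ∈ V_k} Δ_k f j = 1 for each j, and let e_k > 0. Let Q : Fin L → Fin L → ℝ be nonnegative and set g(ϖ) = min_{j ∈ Fin L} ⟨Q_j, ϖ⟩. Define J̄_K = g on the simplex and, for 0 ≤ k < K, A_k(ϖ) = e_{k+1} + Σ_{f ∈ V_{k+1}} ⟨Δ_{k+1} f, ϖ⟩ * J̄_{k+1}( (fun i => Δ_{k+1}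 f i * ϖ i / ⟨Δ_{k+1} f, ϖ⟩) ) and J̄_k(ϖ) = min( g(ϖ), A_k(ϖ) ). Then for every k ∈ {0,…,K-1}, the function A_k is concave on stdSimplex ℝ (Fin L) and continuous on stdSimplex ℝ (Fin L), and likewise every J̄_k is concave and continuous on stdSimplex ℝ (Fin L). -/
section Helpers

variable {L : ℕ}

lemma my_concaveOn_congr {s : Set (Fin L → ℝ)} {f g : (Fin L → ℝ) → ℝ}
    (h : ConcaveOn ℝ s f) (he : ∀ x ∈ s, f x = g x) : ConcaveOn ℝ s g := by
  refine ⟨h.1, fun x hx y hy a b ha hb hab => ?_⟩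
  rw [← he _ hx, ← he _ hy, ← he _ (h.1 hx hy ha hb hab)]
  exact h.2 hx hy ha hb hab

lemma my_concaveOn_sum {ι : Type*} {s : Set (Fin L → ℝ)} (hs : Convex ℝ s)
    (t : Finset ι) (f : ι → (Fin L → ℝ) → ℝ)
    (h : ∀ i ∈ t, ConcaveOn ℝ s (f i)) :
    ConcaveOn ℝ s (fun x => ∑ i ∈ t, f i x) := by
  induction t using Finset.cons_induction with
  | empty => simpa using concaveOn_const 0 hs
  | cons i t hi ih =>
      simp only [Finset.sum_cons]
      exact (h i (Finset.mem_cons_self i t)).add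
        (ih fun j hj => h j (Finset.mem_cons_of_mem hj))

lemma my_concaveOn_inf' {ι : Type*} {s : Set (Fin L → ℝ)}
    (t : Finset ι) (ht : t.Nonempty) (f : ι → (Fin L → ℝ) → ℝ)
    (h : ∀ i ∈ t, ConcaveOn ℝ s (f i)) :
    ConcaveOn ℝ s (fun x => t.inf' ht (fun i => f i x)) := by
  induction ht using Finset.Nonempty.cons_induction with
  | singleton i => simpa using h i (Finset.mem_singleton_self i)
  | cons i t hi hne ih =>
      simp only [Finset.inf'_cons (H := hne)]
      exact (h i (Finset.mem_cons_self i t)).inf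
        (ih fun j hj => h j (Finset.mem_cons_of_mem hj))

lemma my_continuous_inf' {ι : Type*}
    (t : Finset ι) (ht : t.Nonempty) (f : ι → (Fin L → ℝ) → ℝ)
    (h : ∀ i ∈ t, Continuous (f i)) :
    Continuous (fun x => t.inf' ht (fun i => f i x)) := by
  induction ht using Finset.Nonempty.cons_induction with
  | singleton i => simpa using h i (Finset.mem_singleton_self i)
  | cons i t hi hne ih =>
      simp only [Finset.inf'_cons (H := hne)]
      exact (h i (Finset.mem_cons_self i t)).min
        (ih fun j hj => h j (Finset.mem_cons_of_mem hj))

lemma my_sum_pos {c : Fin L → ℝ} (hc : ∀ i, 0 < c i)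
    {ϖ : Fin L → ℝ} (hϖ : ϖ ∈ stdSimplex ℝ (Fin L)) :
    0 < ∑ i, c i * ϖ i := by
  have hex : ∃ i, 0 < ϖ i := by
    by_contra hcon
    push_neg at hcon
    have h0 : ∑ i, ϖ i ≤ 0 := Finset.sum_nonpos fun i _ => hcon i
    rw [hϖ.2] at h0; linarith
  obtain ⟨i, hi⟩ := hex
  refine Finset.sum_pos' (fun j _ => mul_nonneg (hc j).le (hϖ.1 j)) ?_
  exact ⟨i, Finset.mem_univ i, mul_pos (hc i) hi⟩

lemma my_norm_mem {c : Fin L → ℝ} (hc : ∀ i, 0 < c i)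
    {ϖ : Fin L → ℝ} (hϖ : ϖ ∈ stdSimplex ℝ (Fin L)) :
    (fun i => c i * ϖ i / ∑ i', c i' * ϖ i') ∈ stdSimplex ℝ (Fin L) := by
  have hS := my_sum_pos hc hϖ
  constructor
  · exact fun i => div_nonneg (mul_nonneg (hc i).le (hϖ.1 i)) hS.le
  · rw [← Finset.sum_div, div_self hS.ne']

lemma my_perspective_concave {c : Fin L → ℝ} (hc : ∀ i, 0 < c i)
    {h : (Fin L → ℝ) → ℝ} (hconc : ConcaveOn ℝ (stdSimplex ℝ (Fin L)) h) :
    ConcaveOn ℝ (stdSimplex ℝ (Fin L))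
      (fun ϖ => (∑ i, c i * ϖ i) * h (fun i => c i * ϖ i / ∑ i', c i' * ϖ i')) := by
  refine ⟨convex_stdSimplex ℝ (Fin L), fun x hx y hy a b ha hb hab => ?_⟩
  set s := ∑ i, c i * x i with hs
  set t := ∑ i, c i * y i with hts
  have hspos : 0 < s := my_sum_pos hc hx
  have htpos : 0 < t := my_sum_pos hc hy
  have hz : a • x + b • y ∈ stdSimplex ℝ (Fin L) :=
    (convex_stdSimplex ℝ (Fin L)) hx hy ha hb hab
  have hd : (∑ i, c i * (a • x + b • y) i) = a * s + b * t := by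
    rw [hs, hts, Finset.mul_sum, Finset.mul_sum, ← Finset.sum_add_distrib]
    exact Finset.sum_congr rfl fun i _ => by simp [Pi.add_apply]; ring
  have hdpos : 0 < a * s + b * t := by
    rcases ha.lt_or_eq with ha' | ha'
    · have : 0 < a * s := mul_pos ha' hspos
      nlinarith [mul_nonneg hb htpos.le]
    · have hb1 : b = 1 := by linarith
      rw [← ha', hb1]; simpa using htpos
  set x' := fun i => c i * x i / s with hx'def
  set y' := fun i => c i * y i / t with hy'def
  have hx' : x' ∈ stdSimplex ℝ (Fin L) := my_norm_mem hc hx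
  have hy' : y' ∈ stdSimplex ℝ (Fin L) := my_norm_mem hc hy
  have hzeq : (fun i => c i * (a • x + b • y) i / ∑ i', c i' * (a • x + b • y) i')
      = (a * s / (a * s + b * t)) • x' + (b * t / (a * s + b * t)) • y' := by
    funext i
    rw [hd]
    simp only [Pi.add_apply, Pi.smul_apply, smul_eq_mul, hx'def, hy'def]
    field_simp
  have key := hconc.2 hx' hy'
    (div_nonneg (mul_nonneg ha hspos.le) hdpos.le)
    (div_nonneg (mul_nonneg hb htpos.le) hdpos.le)
    (by field_simp)
  rw [← hzeq] at key
  simp only [smul_eq_mul] at key ⊢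
  rw [hd] at key ⊢
  calc a * (s * h x') + b * (t * h y')
      = (a * s + b * t) * (a * s / (a * s + b * t) * h x' + b * t / (a * s + b * t) * h y') := by
        field_simp
    _ ≤ (a * s + b * t) * h (fun i => c i * (a • x + b • y) i / (a * s + b * t)) :=
        mul_le_mul_of_nonneg_left key hdpos.le

lemma my_perspective_continuous {c : Fin L → ℝ} (hc : ∀ i, 0 < c i)
    {h : (Fin L → ℝ) → ℝ} (hcont : ContinuousOn h (stdSimplex ℝ (Fin L))) :
    ContinuousOn
      (fun ϖ => (∑ i, c i * ϖ i) * h (fun i => c i * ϖ i / ∑ i', c i' * ϖ i'))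
      (stdSimplex ℝ (Fin L)) := by
  have hS : Continuous fun ϖ : Fin L → ℝ => ∑ i, c i * ϖ i :=
    continuous_finset_sum _ fun i _ => continuous_const.mul (continuous_apply i)
  have hnorm : ContinuousOn (fun ϖ : Fin L → ℝ => fun i => c i * ϖ i / ∑ i', c i' * ϖ i')
      (stdSimplex ℝ (Fin L)) := by
    rw [continuousOn_pi]
    intro i
    exact ((continuous_const.mul (continuous_apply i)).continuousOn).div
      hS.continuousOn (fun x hx => (my_sum_pos hc hx).ne')
  exact hS.continuousOn.mul
    (hcont.comp hnorm fun x hx => my_norm_mem hc hx)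

lemma my_linear_concave (q : Fin L → ℝ) :
    ConcaveOn ℝ (stdSimplex ℝ (Fin L)) (fun ϖ => ∑ i, q i * ϖ i) := by
  refine ⟨convex_stdSimplex ℝ (Fin L), fun x _ y _ a b _ _ _ => le_of_eq ?_⟩
  simp only [smul_eq_mul]
  rw [Finset.mul_sum, Finset.mul_sum, ← Finset.sum_add_distrib]
  exact Finset.sum_congr rfl fun i _ => by simp [Pi.add_apply]; ring

end Helpers

/-- Lemma 2 of the paper: the expected cost-to-go functions `A_k`,
`k = 0,…,K-1`, of the dynamic program of Theorem 1, and the value functions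
`J̄_k`, are concave and continuous on the probability simplex. -/
theorem cost_to_go_concave_continuous (L K : ℕ) (hL : 1 ≤ L) (hK : 1 ≤ K)
    (V : ℕ → Type*) [∀ k, Fintype (V k)] [∀ k, Nonempty (V k)]
    (Δ : ∀ k, V k → Fin L → ℝ)
    (hΔpos : ∀ k, 1 ≤ k → k ≤ K → ∀ (f : V k) (j : Fin L), 0 < Δ k f j)
    (hΔsum : ∀ k, 1 ≤ k → k ≤ K → ∀ j : Fin L, ∑ f, Δ k f j = 1)
    (e : ℕ → ℝ) (he : ∀ k, 1 ≤ k → k ≤ K → 0 < e k)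
    (Q : Fin L → Fin L → ℝ) (hQ : ∀ i j, 0 ≤ Q i j)
    (g : (Fin L → ℝ) → ℝ)
    (hg : ∀ ϖ : Fin L → ℝ,
      g ϖ = Finset.univ.inf' (Finset.univ_nonempty_iff.mpr ⟨⟨0, hL⟩⟩)
        (fun j : Fin L => ∑ i, Q i j * ϖ i))
    (Jb A : ℕ → (Fin L → ℝ) → ℝ)
    (hJK : ∀ ϖ ∈ stdSimplex ℝ (Fin L), Jb K ϖ = g ϖ)
    (hA : ∀ k < K, ∀ ϖ ∈ stdSimplex ℝ (Fin L),
      A k ϖ = e (k + 1) + ∑ f : V (k + 1), (∑ i, Δ (k + 1) f i * ϖ i) *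
        Jb (k + 1) (fun i => Δ (k + 1) f i * ϖ i / ∑ i', Δ (k + 1) f i' * ϖ i'))
    (hJ : ∀ k < K, ∀ ϖ ∈ stdSimplex ℝ (Fin L),
      Jb k ϖ = min (g ϖ) (A k ϖ)) :
    (∀ k < K, ConcaveOn ℝ (stdSimplex ℝ (Fin L)) (A k) ∧
      ContinuousOn (A k) (stdSimplex ℝ (Fin L))) ∧
    (∀ k ≤ K, ConcaveOn ℝ (stdSimplex ℝ (Fin L)) (Jb k) ∧
      ContinuousOn (Jb k) (stdSimplex ℝ (Fin L))) := by
  have hgeq : g = fun ϖ => Finset.univ.inf' (Finset.univ_nonempty_iff.mpr ⟨⟨0, hL⟩⟩)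
      (fun j : Fin L => ∑ i, Q i j * ϖ i) := funext hg
  have hgconc : ConcaveOn ℝ (stdSimplex ℝ (Fin L)) g := by
    rw [hgeq]
    exact my_concaveOn_inf' _ _ _ (fun j _ => my_linear_concave (fun i => Q i j))
  have hgcont : Continuous g := by
    rw [hgeq]
    exact my_continuous_inf' _ _ _ (fun j _ =>
      continuous_finset_sum _ fun i _ => continuous_const.mul (continuous_apply i))
  have main : ∀ n k : ℕ, k + n = K →
      (ConcaveOn ℝ (stdSimplex ℝ (Fin L)) (Jb k) ∧
        ContinuousOn (Jb k) (stdSimplex ℝ (Fin L))) ∧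
      (k < K → ConcaveOn ℝ (stdSimplex ℝ (Fin L)) (A k) ∧
        ContinuousOn (A k) (stdSimplex ℝ (Fin L))) := by
    intro n
    induction n with
    | zero =>
        intro k hk
        have hkK : k = K := by omega
        subst hkK
        refine ⟨⟨my_concaveOn_congr hgconc (fun x hx => (hJK x hx).symm),
          hgcont.continuousOn.congr (fun x hx => hJK x hx)⟩, fun h => absurd h (lt_irrefl _)⟩
    | succ n ih =>
        intro k hk
        have hklt : k < K := by omega
        obtain ⟨⟨ihconc, ihcont⟩, -⟩ := ih (k + 1) (by omega)
        have hc : ∀ (f : V (k + 1)) (i : Fin L), 0 < Δ (k + 1) f i :=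
          fun f i => hΔpos (k + 1) (by omega) (by omega) f i
        have hAconc : ConcaveOn ℝ (stdSimplex ℝ (Fin L)) (A k) := by
          refine my_concaveOn_congr
            ((concaveOn_const (e (k + 1)) (convex_stdSimplex ℝ (Fin L))).add
              (my_concaveOn_sum (convex_stdSimplex ℝ (Fin L)) Finset.univ
                (fun f ϖ => (∑ i, Δ (k + 1) f i * ϖ i) *
                  Jb (k + 1) (fun i => Δ (k + 1) f i * ϖ i / ∑ i', Δ (k + 1) f i' * ϖ i'))
                (fun f _ => my_perspective_concave (hc f) ihconc)))
            (fun x hx => (hA k hklt x hx).symm)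
        have hAcont : ContinuousOn (A k) (stdSimplex ℝ (Fin L)) := by
          refine ContinuousOn.congr
            (continuousOn_const.add (continuousOn_finset_sum Finset.univ
              (fun f _ => my_perspective_continuous (hc f) ihcont)))
            (fun x hx => hA k hklt x hx)
        refine ⟨⟨?_, ?_⟩, fun _ => ⟨hAconc, hAcont⟩⟩
        · exact my_concaveOn_congr (hgconc.inf hAconc)
            (fun x hx => by rw [Pi.inf_apply, ← hJ k hklt x hx])
        · refine ContinuousOn.congr (hgcont.continuousOn.inf hAcont) (fun x hx => ?_)
          rw [hJ k hklt x hx]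
  constructor
  · intro k hk
    exact (main (K - k) k (by omega)).2 hk
  · intro k hk
    exact (main (K - k) k (by omega)).1
end

section
/- Fix integers L ≥ 1 and K ≥ 1. For each k ∈ {1,…,K} let V_k be a nonempty finite type, let Δ_k : V_k → Fin L → ℝ satisfy Δ_k f j > 0 for all f, j and Σ_{f ∈ V_k} Δ_k f j = 1 for each j, and let e_k > 0. Let Q : Fin L → Fin L → ℝ be nonnegative and set g(ϖ) = min_{j ∈ Fin L} ⟨Q_j, ϖ⟩. Define J̄_K = g on the simplex and, for 0 ≤ k < K, A_k(ϖ) = e_{k+1} + Σ_{f ∈ V_{k+1}} ⟨Δ_{k+1} f, ϖ⟩ * J̄_{k+1}( (fun i => Δ_{k+1} f i * ϖ i / ⟨Δ_{k+1} f, ϖ⟩) ) and J̄_k(ϖ) = min( g(ϖ), A_k(ϖ) ). Then for every stage k ∈ {0,…,K} there exists a nonempty finite set of vectors {α_k^i} ⊆ (Fin L → ℝ) such that J̄_k(ϖ) = min_i ⟨α_k^i, ϖ⟩ for all ϖ ∈ stdSimplex ℝ (Fin L); moreover at stage K one may take {α_K^i} = {Q_j : j ∈ Fin L}. -/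
private lemma mul_inf'_eq {α : Type*} (s : Finset α) (hs : s.Nonempty) (c : ℝ) (hc : 0 ≤ c)
    (f : α → ℝ) : c * s.inf' hs f = s.inf' hs fun a => c * f a := by
  apply le_antisymm
  · exact Finset.le_inf' _ _ fun b hb =>
      mul_le_mul_of_nonneg_left (Finset.inf'_le _ hb) hc
  · obtain ⟨a, ha, hEq⟩ := Finset.exists_mem_eq_inf' hs f
    rw [hEq]
    exact Finset.inf'_le _ ha

private lemma add_inf'_eq {α : Type*} (s : Finset α) (hs : s.Nonempty) (c : ℝ)
    (f : α → ℝ) : c + s.inf' hs f = s.inf' hs fun a => c + f a := by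
  apply le_antisymm
  · exact Finset.le_inf' _ _ fun b hb => add_le_add le_rfl (Finset.inf'_le _ hb)
  · obtain ⟨a, ha, hEq⟩ := Finset.exists_mem_eq_inf' hs f
    rw [hEq]
    exact Finset.inf'_le _ ha

private lemma sum_inf'_eq {ι α : Type*} [Fintype ι] [DecidableEq ι] (s : ι → Finset α)
    (hs : ∀ i, (s i).Nonempty) (φ : ι → α → ℝ) :
    ∑ i, (s i).inf' (hs i) (φ i)
      = (Fintype.piFinset s).inf' (Fintype.piFinset_nonempty.2 hs)
          fun c => ∑ i, φ i (c i) := by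
  apply le_antisymm
  · exact Finset.le_inf' _ _ fun c hc => Finset.sum_le_sum fun i _ =>
      Finset.inf'_le _ (Fintype.mem_piFinset.mp hc i)
  · choose a ha hEq using fun i => Finset.exists_mem_eq_inf' (hs i) (φ i)
    calc (Fintype.piFinset s).inf' (Fintype.piFinset_nonempty.2 hs) (fun c => ∑ i, φ i (c i))
        ≤ ∑ i, φ i (a i) := Finset.inf'_le _ (Fintype.mem_piFinset.mpr ha)
      _ = ∑ i, (s i).inf' (hs i) (φ i) :=
          Finset.sum_congr rfl fun i _ => (hEq i).symm

/-- Theorem 2 of the paper: at every stage `k ∈ {0,…,K}` there exists a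
nonempty finite set `{α_k^i}` of vectors such that the dynamic-programming
value function satisfies `J̄_k(ϖ) = min_i ⟨α_k^i, ϖ⟩` on the simplex; at stage
`K` one may take `{α_K^i} = {Q_j : j}`. -/
theorem value_function_min_of_hyperplanes (L K : ℕ) (hL : 1 ≤ L) (hK : 1 ≤ K)
    (V : ℕ → Type*) [∀ k, Fintype (V k)] [∀ k, Nonempty (V k)]
    (Δ : ∀ k, V k → Fin L → ℝ)
    (hΔpos : ∀ k, 1 ≤ k → k ≤ K → ∀ (f : V k) (j : Fin L), 0 < Δ k f j)
    (hΔsum : ∀ k, 1 ≤ k → k ≤ K → ∀ j : Fin L, ∑ f, Δ k f j = 1)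
    (e : ℕ → ℝ) (he : ∀ k, 1 ≤ k → k ≤ K → 0 < e k)
    (Q : Fin L → Fin L → ℝ) (hQ : ∀ i j, 0 ≤ Q i j)
    (g : (Fin L → ℝ) → ℝ)
    (hg : ∀ ϖ : Fin L → ℝ,
      g ϖ = Finset.univ.inf' (Finset.univ_nonempty_iff.mpr ⟨⟨0, hL⟩⟩)
        (fun j : Fin L => ∑ i, Q i j * ϖ i))
    (Jb A : ℕ → (Fin L → ℝ) → ℝ)
    (hJK : ∀ ϖ ∈ stdSimplex ℝ (Fin L), Jb K ϖ = g ϖ)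
    (hA : ∀ k < K, ∀ ϖ ∈ stdSimplex ℝ (Fin L),
      A k ϖ = e (k + 1) + ∑ f : V (k + 1), (∑ i, Δ (k + 1) f i * ϖ i) *
        Jb (k + 1) (fun i => Δ (k + 1) f i * ϖ i / ∑ i', Δ (k + 1) f i' * ϖ i'))
    (hJ : ∀ k < K, ∀ ϖ ∈ stdSimplex ℝ (Fin L),
      Jb k ϖ = min (g ϖ) (A k ϖ)) :
    (∀ k ≤ K, ∃ (s : Finset (Fin L → ℝ)) (hs : s.Nonempty),
      ∀ ϖ ∈ stdSimplex ℝ (Fin L),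
        Jb k ϖ = s.inf' hs (fun a => ∑ i, a i * ϖ i)) ∧
    (∃ hs : (@Finset.image _ _ (Classical.decEq _)
        (fun j : Fin L => fun i : Fin L => Q i j) Finset.univ).Nonempty,
      ∀ ϖ ∈ stdSimplex ℝ (Fin L),
        Jb K ϖ = (@Finset.image _ _ (Classical.decEq _)
          (fun j : Fin L => fun i : Fin L => Q i j) Finset.univ).inf' hs
            (fun a => ∑ i, a i * ϖ i)) := by
  classical
  haveI : Nonempty (Fin L) := ⟨⟨0, hL⟩⟩
  -- the set of hyperplanes at stage K
  set sQ : Finset (Fin L → ℝ) :=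
    Finset.univ.image (fun j : Fin L => fun i : Fin L => Q i j) with hsQ
  have hsQne : sQ.Nonempty := Finset.image_nonempty.mpr Finset.univ_nonempty
  -- `g` is the min of the `Q_j` hyperplanes on all of ℝ^L
  have hgQ : ∀ ϖ : Fin L → ℝ, g ϖ = sQ.inf' hsQne fun a => ∑ i, a i * ϖ i := by
    intro ϖ
    have himg := Finset.inf'_image (s := (Finset.univ : Finset (Fin L)))
      (f := fun j : Fin L => fun i : Fin L => Q i j) hsQne (fun a => ∑ i, a i * ϖ i)
    rw [hg ϖ, himg]
    rfl
  -- main downward induction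
  have key : ∀ d k, k + d = K → ∃ (s : Finset (Fin L → ℝ)) (hs : s.Nonempty),
      ∀ ϖ ∈ stdSimplex ℝ (Fin L), Jb k ϖ = s.inf' hs fun a => ∑ i, a i * ϖ i := by
    intro d
    induction d with
    | zero =>
      intro k hk
      obtain rfl : k = K := by omega
      exact ⟨sQ, hsQne, fun ϖ hϖ => by rw [hJK ϖ hϖ, hgQ]⟩
    | succ d ih =>
      intro k hk
      have hkK : k < K := by omega
      obtain ⟨s', hs', hrec⟩ := ih (k + 1) (by omega)
      -- hyperplanes coming from the recursion
      set β : (V (k + 1) → (Fin L → ℝ)) → (Fin L → ℝ) :=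
        fun c => fun i => e (k + 1) + ∑ f, Δ (k + 1) f i * c f i with hβ
      set T : Finset (Fin L → ℝ) :=
        (Fintype.piFinset fun _ : V (k + 1) => s').image β with hT
      have hTne : T.Nonempty :=
        Finset.image_nonempty.mpr (Fintype.piFinset_nonempty.2 fun _ => hs')
      refine ⟨sQ ∪ T, Finset.Nonempty.mono Finset.subset_union_left hsQne, ?_⟩
      intro ϖ hϖ
      have hϖ0 : ∀ i, 0 ≤ ϖ i := hϖ.1
      have hϖ1 : ∑ i, ϖ i = 1 := hϖ.2
      have hΔp : ∀ (f : V (k + 1)) (j : Fin L), 0 < Δ (k + 1) f j :=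
        hΔpos (k + 1) (by omega) (by omega)
      -- positivity of the normalizing constant
      have hDpos : ∀ f : V (k + 1), 0 < ∑ i, Δ (k + 1) f i * ϖ i := by
        intro f
        have hex : ∃ i, 0 < ϖ i := by
          by_contra h
          push_neg at h
          have : ∑ i, ϖ i = 0 := Finset.sum_eq_zero fun i _ =>
            le_antisymm (h i) (hϖ0 i)
          rw [this] at hϖ1; norm_num at hϖ1
        obtain ⟨i0, hi0⟩ := hex
        refine Finset.sum_pos' (fun i _ => mul_nonneg (hΔp f i).le (hϖ0 i)) ?_
        exact ⟨i0, Finset.mem_univ i0, mul_pos (hΔp f i0) hi0⟩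
      -- normalized vectors are in the simplex
      have hnorm : ∀ f : V (k + 1),
          (fun i => Δ (k + 1) f i * ϖ i / ∑ i', Δ (k + 1) f i' * ϖ i') ∈
            stdSimplex ℝ (Fin L) := by
        intro f
        constructor
        · intro i
          exact div_nonneg (mul_nonneg (hΔp f i).le (hϖ0 i)) (hDpos f).le
        · rw [← Finset.sum_div]
          exact div_self (hDpos f).ne'
      -- compute `A k ϖ` as a min of hyperplanes
      have hAmin : A k ϖ = T.inf' hTne fun a => ∑ i, a i * ϖ i := by
        have step1 : ∀ f : V (k + 1),
            (∑ i, Δ (k + 1) f i * ϖ i) *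
              Jb (k + 1) (fun i => Δ (k + 1) f i * ϖ i / ∑ i', Δ (k + 1) f i' * ϖ i')
            = s'.inf' hs' fun a => ∑ i, Δ (k + 1) f i * a i * ϖ i := by
          intro f
          rw [hrec _ (hnorm f), mul_inf'_eq _ _ _ (hDpos f).le]
          refine Finset.inf'_congr _ rfl fun a _ => ?_
          rw [Finset.mul_sum]
          refine Finset.sum_congr rfl fun i _ => ?_
          have hD : (∑ i', Δ (k + 1) f i' * ϖ i') ≠ 0 := (hDpos f).ne'
          field_simp
        rw [hA k hkK ϖ hϖ]
        simp_rw [step1]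
        rw [sum_inf'_eq, add_inf'_eq]
        have himg := Finset.inf'_image
          (s := Fintype.piFinset fun _ : V (k + 1) => s') (f := β) hTne
          (fun a => ∑ i, a i * ϖ i)
        rw [himg]
        refine Finset.inf'_congr _ rfl fun c _ => ?_
        show e (k + 1) + ∑ f, ∑ i, Δ (k + 1) f i * c f i * ϖ i
            = ((fun a => ∑ i, a i * ϖ i) ∘ β) c
        simp only [Function.comp, hβ, add_mul, Finset.sum_add_distrib, Finset.sum_mul,
          ← Finset.mul_sum]
        rw [hϖ1, mul_one, Finset.sum_comm]
      rw [hJ k hkK ϖ hϖ, hgQ, hAmin, Finset.inf'_union hsQne hTne]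
  refine ⟨fun k hk => key (K - k) k (by omega), ?_⟩
  have hEqset : (@Finset.image _ _ (Classical.decEq _)
      (fun j : Fin L => fun i : Fin L => Q i j) Finset.univ) = sQ := by
    rw [hsQ]
    congr 1
    exact Subsingleton.elim _ _
  refine ⟨hEqset ▸ hsQne, fun ϖ hϖ => ?_⟩
  rw [hJK ϖ hϖ, hgQ ϖ]
  exact Finset.inf'_congr (H := hsQne) hEqset.symm fun _ _ => rfl
end
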